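/- The function γ(ξ) = Real.log (g ξ) is convex on Ω, i.e. ConvexOn ℝ Ω (fun ξ => Real.log (g ξ)). (Corollary: the log-exp transform γ(ξ) = log C(e^ξ) of a multivariate generating function is convex on its domain of convergence.) -/

import Mathlib

open Real

lemma log_exp_key {k : ℕ} (c : (Fin k → ℕ) → ℝ) (hc : ∀ p, 0 ≤ c p)
    {ξ η : Fin k → ℝ} {a b : ℝ} (ha : 0 < a) (hb : 0 < b) (hab : a + b = 1)
    (hξ : Summable fun p : Fin k → ℕ => c p * Real.exp (∑ i, (p i : ℝ) * ξ i))
    (hη : Summable fun p : Fin k → ℕ => c p * Real.exp (∑ i, (p i : ℝ) * η i)) :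
    (Summable fun p : Fin k → ℕ =>
      c p * Real.exp (∑ i, (p i : ℝ) * (a • ξ + b • η) i)) ∧
    (∑' p : Fin k → ℕ, c p * Real.exp (∑ i, (p i : ℝ) * (a • ξ + b • η) i)) ≤
      (∑' p : Fin k → ℕ, c p * Real.exp (∑ i, (p i : ℝ) * ξ i)) ^ a *
      (∑' p : Fin k → ℕ, c p * Real.exp (∑ i, (p i : ℝ) * η i)) ^ b := by
  set F : (Fin k → ℕ) → ℝ := fun p => c p * Real.exp (∑ i, (p i : ℝ) * ξ i) with hF
  set G : (Fin k → ℕ) → ℝ := fun p => c p * Real.exp (∑ i, (p i : ℝ) * η i) with hG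
  have hFnn : ∀ p, 0 ≤ F p := fun p => mul_nonneg (hc p) (Real.exp_pos _).le
  have hGnn : ∀ p, 0 ≤ G p := fun p => mul_nonneg (hc p) (Real.exp_pos _).le
  have ha1 : a < 1 := by linarith
  have hpq : Real.HolderConjugate (1/a) (1/b) := by
    rw [Real.holderConjugate_iff]
    constructor
    · rw [lt_div_iff₀ ha, one_mul]; exact ha1
    · rw [one_div, one_div, inv_inv, inv_inv]; exact hab
  -- pointwise identity
  have key : ∀ p : Fin k → ℕ,
      F p ^ a * G p ^ b = c p * Real.exp (∑ i, (p i : ℝ) * (a • ξ + b • η) i) := by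
    intro p
    have hexp : (∑ i, (p i : ℝ) * (a • ξ + b • η) i)
        = a * (∑ i, (p i : ℝ) * ξ i) + b * (∑ i, (p i : ℝ) * η i) := by
      simp only [Pi.add_apply, Pi.smul_apply, smul_eq_mul, mul_add, Finset.sum_add_distrib,
        Finset.mul_sum]
      congr 1 <;> exact Finset.sum_congr rfl fun i _ => by ring
    rw [hexp, hF, hG]
    rw [Real.mul_rpow (hc p) (Real.exp_pos _).le, Real.mul_rpow (hc p) (Real.exp_pos _).le,
      ← Real.exp_mul, ← Real.exp_mul]
    rw [Real.exp_add]
    have : c p ^ a * c p ^ b = c p := by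
      rw [← Real.rpow_add_of_nonneg (hc p) ha.le hb.le, hab, Real.rpow_one]
    calc c p ^ a * Real.exp ((∑ i, (p i : ℝ) * ξ i) * a) *
          (c p ^ b * Real.exp ((∑ i, (p i : ℝ) * η i) * b))
        = (c p ^ a * c p ^ b) * (Real.exp ((∑ i, (p i : ℝ) * ξ i) * a) *
            Real.exp ((∑ i, (p i : ℝ) * η i) * b)) := by ring
      _ = c p * (Real.exp (a * ∑ i, (p i : ℝ) * ξ i) * Real.exp (b * ∑ i, (p i : ℝ) * η i)) := by
          rw [this, mul_comm a, mul_comm b]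
  have hFsum : Summable fun p => (F p ^ a) ^ (1/a) := by
    have : ∀ p, (F p ^ a) ^ (1/a) = F p := fun p => by
      rw [← Real.rpow_mul (hFnn p), mul_one_div, div_self ha.ne', Real.rpow_one]
    simpa only [this] using hξ
  have hGsum : Summable fun p => (G p ^ b) ^ (1/b) := by
    have : ∀ p, (G p ^ b) ^ (1/b) = G p := fun p => by
      rw [← Real.rpow_mul (hGnn p), mul_one_div, div_self hb.ne', Real.rpow_one]
    simpa only [this] using hη
  obtain ⟨h1, h2⟩ := Real.summable_and_inner_le_Lp_mul_Lq_tsum_of_nonneg hpq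
    (fun p => Real.rpow_nonneg (hFnn p) a) (fun p => Real.rpow_nonneg (hGnn p) b) hFsum hGsum
  have hFeq : ∀ p, (F p ^ a) ^ (1/a) = F p := fun p => by
    rw [← Real.rpow_mul (hFnn p), mul_one_div, div_self ha.ne', Real.rpow_one]
  have hGeq : ∀ p, (G p ^ b) ^ (1/b) = G p := fun p => by
    rw [← Real.rpow_mul (hGnn p), mul_one_div, div_self hb.ne', Real.rpow_one]
  simp only [hFeq, hGeq, one_div_one_div, key] at h1 h2
  exact ⟨h1, h2⟩

/-- The log-exp transform `γ(ξ) = log C(e^ξ)` of a multivariate generating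
function with nonnegative coefficients is convex on its domain of convergence. -/
theorem log_exp_transform_convexOn
    (k : ℕ) (hk : 1 ≤ k)
    (c : (Fin k → ℕ) → ℝ)
    (hc : ∀ p, 0 ≤ c p) (hc0 : c ≠ 0)
    (g : (Fin k → ℝ) → ℝ)
    (hg : ∀ ξ, g ξ = ∑' p : Fin k → ℕ, c p * Real.exp (∑ i, (p i : ℝ) * ξ i))
    (Ω : Set (Fin k → ℝ))
    (hΩ : Ω = {ξ : Fin k → ℝ |
      Summable fun p : Fin k → ℕ => c p * Real.exp (∑ i, (p i : ℝ) * ξ i)}) :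
    ConvexOn ℝ Ω (fun ξ => Real.log (g ξ)) := by
  subst hΩ
  obtain ⟨p0, hp0⟩ := Function.ne_iff.mp hc0
  have hp0' : 0 < c p0 := lt_of_le_of_ne (hc p0) (Ne.symm hp0)
  have gpos : ∀ ζ : Fin k → ℝ,
      (Summable fun p : Fin k → ℕ => c p * Real.exp (∑ i, (p i : ℝ) * ζ i)) → 0 < g ζ := by
    intro ζ hζ
    rw [hg]
    exact Summable.tsum_pos hζ (fun p => mul_nonneg (hc p) (Real.exp_pos _).le) p0
      (mul_pos hp0' (Real.exp_pos _))
  constructor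
  · intro ξ hξ η hη a b ha hb hab
    rcases eq_or_lt_of_le ha with ha0 | ha0
    · have hb1 : b = 1 := by linarith
      simpa [← ha0, hb1] using hη
    rcases eq_or_lt_of_le hb with hb0 | hb0
    · have ha1 : a = 1 := by linarith
      simpa [← hb0, ha1] using hξ
    exact (log_exp_key c hc ha0 hb0 hab hξ hη).1
  · intro ξ hξ η hη a b ha hb hab
    rcases eq_or_lt_of_le ha with ha0 | ha0
    · have hb1 : b = 1 := by linarith
      simp [← ha0, hb1]
    rcases eq_or_lt_of_le hb with hb0 | hb0
    · have ha1 : a = 1 := by linarith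
      simp [← hb0, ha1]
    obtain ⟨hsum, hle⟩ := log_exp_key c hc ha0 hb0 hab hξ hη
    have hposc : 0 < g (a • ξ + b • η) := gpos _ hsum
    have hposξ : 0 < g ξ := gpos _ hξ
    have hposη : 0 < g η := gpos _ hη
    have hle' : g (a • ξ + b • η) ≤ g ξ ^ a * g η ^ b := by
      rw [hg, hg, hg]; exact hle
    calc Real.log (g (a • ξ + b • η)) ≤ Real.log (g ξ ^ a * g η ^ b) :=
          Real.log_le_log hposc hle'
      _ = a * Real.log (g ξ) + b * Real.log (g η) := by
          rw [Real.log_mul (Real.rpow_pos_of_pos hposξ a).ne'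
            (Real.rpow_pos_of_pos hposη b).ne', Real.log_rpow hposξ, Real.log_rpow hposη]
      _ = a • Real.log (g ξ) + b • Real.log (g η) := by simp [smul_eq_mul]
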